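/- Let m_1, m_2, m_3, b_1, b_2, d_1 be positive reals with b_2/b_1 = m_3/m_2 and set ζ = √(b_1/m_2). Consider the linear ODE on ℝ⁵ with state (η_1, η_2, ω_1, ω_2, ω_3): dη/dt = Bᵀω, M·dω/dt = -B·W·η - D·ω, where B is the 3×2 matrix with rows (1,1), (-1,0), (0,-1), W = diag(b_1, b_2), M = diag(m_1, m_2, m_3), and D = diag(d_1, 0, 0). Then the functions η_1(t) = (b_2/b_1)·cos(ζt), η_2(t) = -cos(ζt), ω_1(t) = 0, ω_2(t) = (b_2/√(b_1·m_2))·sin(ζt), ω_3(t) = -ζ·sin(ζt) form a solution of this ODE, and this solution does not converge to the origin as t → ∞; consequently the origin of the system is not asymptotically stable. -/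

import Mathlib

/-- `IsSolution m1 m2 m3 b1 b2 d1 η1 η2 ω1 ω2 ω3` states that the functions
`η1, η2, ω1, ω2, ω3 : ℝ → ℝ` solve the three-machine linear ODE
`dη/dt = Bᵀω`, `M·dω/dt = -B·W·η - D·ω` with
`B = [(1,1);(-1,0);(0,-1)]`, `W = diag(b1,b2)`, `M = diag(m1,m2,m3)`,
`D = diag(d1,0,0)`. -/
def IsSolution (m1 m2 m3 b1 b2 d1 : ℝ) (η1 η2 ω1 ω2 ω3 : ℝ → ℝ) : Prop :=
  ∀ t : ℝ,
    HasDerivAt η1 (ω1 t - ω2 t) t ∧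
    HasDerivAt η2 (ω1 t - ω3 t) t ∧
    HasDerivAt ω1 ((-(b1 * η1 t + b2 * η2 t) - d1 * ω1 t) / m1) t ∧
    HasDerivAt ω2 (b1 * η1 t / m2) t ∧
    HasDerivAt ω3 (b2 * η2 t / m3) t

lemma cos_deriv (c ζ t : ℝ) :
    HasDerivAt (fun t => c * Real.cos (ζ * t)) (-(c * ζ) * Real.sin (ζ * t)) t := by
  have h1 : HasDerivAt (fun t : ℝ => ζ * t) ζ t := by
    simpa using (hasDerivAt_id t).const_mul ζ
  have h2 := (Real.hasDerivAt_cos (ζ * t)).comp t h1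
  have h3 := h2.const_mul c
  convert h3 using 1
  · rfl
  · rfl
  · rfl
  · ring

lemma sin_deriv (c ζ t : ℝ) :
    HasDerivAt (fun t => c * Real.sin (ζ * t)) ((c * ζ) * Real.cos (ζ * t)) t := by
  have h1 : HasDerivAt (fun t : ℝ => ζ * t) ζ t := by
    simpa using (hasDerivAt_id t).const_mul ζ
  have h2 := (Real.hasDerivAt_sin (ζ * t)).comp t h1
  have h3 := h2.const_mul c
  convert h3 using 1
  · rfl
  · rfl
  · rfl
  · ring

/-- Example 1 -/
theorem three_machine_not_asymptotically_stable
    (m1 m2 m3 b1 b2 d1 : ℝ)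
    (hm1 : 0 < m1) (hm2 : 0 < m2) (hm3 : 0 < m3)
    (hb1 : 0 < b1) (hb2 : 0 < b2) (hd1 : 0 < d1)
    (hratio : b2 / b1 = m3 / m2)
    (ζ : ℝ) (hζ : ζ = Real.sqrt (b1 / m2)) :
    IsSolution m1 m2 m3 b1 b2 d1
      (fun t => (b2 / b1) * Real.cos (ζ * t))
      (fun t => -Real.cos (ζ * t))
      (fun _ => 0)
      (fun t => (b2 / Real.sqrt (b1 * m2)) * Real.sin (ζ * t))
      (fun t => -ζ * Real.sin (ζ * t))
    ∧ ¬ Filter.Tendsto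
        (fun t => ((b2 / b1) * Real.cos (ζ * t), -Real.cos (ζ * t), (0 : ℝ),
          (b2 / Real.sqrt (b1 * m2)) * Real.sin (ζ * t), -ζ * Real.sin (ζ * t)))
        Filter.atTop (nhds 0)
    ∧ ¬ (∀ η1 η2 ω1 ω2 ω3 : ℝ → ℝ,
          IsSolution m1 m2 m3 b1 b2 d1 η1 η2 ω1 ω2 ω3 →
          Filter.Tendsto (fun t => (η1 t, η2 t, ω1 t, ω2 t, ω3 t))
            Filter.atTop (nhds 0)) := by
  have hζpos : 0 < ζ := by
    rw [hζ]; exact Real.sqrt_pos.mpr (div_pos hb1 hm2)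
  have hζsq : ζ ^ 2 = b1 / m2 := by
    rw [hζ, sq]; exact Real.mul_self_sqrt (le_of_lt (div_pos hb1 hm2))
  have hSpos : 0 < Real.sqrt (b1 * m2) := Real.sqrt_pos.mpr (mul_pos hb1 hm2)
  have hζm : ζ ^ 2 * m2 = b1 := by
    rw [hζsq]; field_simp
  have hS : ζ * m2 = Real.sqrt (b1 * m2) := by
    calc ζ * m2 = Real.sqrt (b1 / m2) * Real.sqrt (m2 ^ 2) := by
          rw [hζ, Real.sqrt_sq hm2.le]
      _ = Real.sqrt (b1 / m2 * m2 ^ 2) := (Real.sqrt_mul (div_pos hb1 hm2).le _).symm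
      _ = Real.sqrt (b1 * m2) := by congr 1; field_simp
  set S := Real.sqrt (b1 * m2) with hSdef
  have hsol : IsSolution m1 m2 m3 b1 b2 d1
      (fun t => (b2 / b1) * Real.cos (ζ * t))
      (fun t => -Real.cos (ζ * t))
      (fun _ => 0)
      (fun t => (b2 / S) * Real.sin (ζ * t))
      (fun t => -ζ * Real.sin (ζ * t)) := by
    intro t
    refine ⟨?_, ?_, ?_, ?_, ?_⟩
    · have := cos_deriv (b2 / b1) ζ t
      convert this using 1
      have : b2 / b1 * ζ = b2 / S := by
        rw [← hS]
        field_simp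
        linear_combination hζm
      rw [this]; ring
    · have := cos_deriv (-1) ζ t
      have h' : HasDerivAt (fun t => -Real.cos (ζ * t)) (ζ * Real.sin (ζ * t)) t := by
        convert this using 2 <;> ring
      convert h' using 1
      ring
    · have h' : HasDerivAt (fun _ : ℝ => (0:ℝ)) 0 t := hasDerivAt_const t 0
      convert h' using 1
      field_simp [hb1.ne']
      ring
    · have := sin_deriv (b2 / S) ζ t
      convert this using 1
      have : b2 / S * ζ = b1 * (b2 / b1) / m2 := by
        rw [← hS]
        field_simp
      rw [this]
      ring
    · have := sin_deriv (-ζ) ζ t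
      convert this using 1
      have h1 : b2 * m2 = m3 * b1 := by
        field_simp at hratio; linarith
      have hb2e : b2 = ζ ^ 2 * m3 :=
        mul_right_cancel₀ hm2.ne' (by linear_combination h1 - m3 * hζm)
      rw [hb2e]
      field_simp
  have hnot : ¬ Filter.Tendsto
        (fun t => ((b2 / b1) * Real.cos (ζ * t), -Real.cos (ζ * t), (0 : ℝ),
          (b2 / S) * Real.sin (ζ * t), -ζ * Real.sin (ζ * t)))
        Filter.atTop (nhds 0) := by
    intro htend
    have hcont : Continuous (fun p : ℝ × ℝ × ℝ × ℝ × ℝ => p.2.1) :=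
      continuous_fst.comp continuous_snd
    have h2 : Filter.Tendsto (fun t => -Real.cos (ζ * t)) Filter.atTop (nhds 0) := by
      have := (hcont.tendsto (0:ℝ × ℝ × ℝ × ℝ × ℝ)).comp htend
      simpa [Function.comp_def] using this
    have hseq : Filter.Tendsto (fun n : ℕ => (2 * Real.pi / ζ) * n) Filter.atTop Filter.atTop := by
      apply Filter.Tendsto.const_mul_atTop
      · positivity
      · exact tendsto_natCast_atTop_atTop
    have h3 := h2.comp hseq
    have h4 : ∀ n : ℕ, -Real.cos (ζ * ((2 * Real.pi / ζ) * n)) = -1 := by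
      intro n
      have : ζ * ((2 * Real.pi / ζ) * n) = n * (2 * Real.pi) := by
        field_simp
      rw [this, Real.cos_nat_mul_two_pi]
    have h5 : Filter.Tendsto (fun _ : ℕ => (-1 : ℝ)) Filter.atTop (nhds 0) := by
      convert h3 using 1
      funext n
      simp [Function.comp, (h4 n).symm]
    have := tendsto_nhds_unique h5 tendsto_const_nhds
    norm_num at this
  refine ⟨hsol, hnot, ?_⟩
  intro hall
  exact hnot (hall _ _ _ _ _ hsol)
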